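/- Let X = Xᵀ > 0 and Y = Yᵀ > 0 be real matrices. Then there exists an invertible matrix T such that T X Tᵀ = T^{-ᵀ} Y T^{-1} = Σ is diagonal with positive entries σ_1 ≥ ... ≥ σ_n equal to the square roots of the eigenvalues of XY (simultaneous balancing of a pair of positive definite matrices). -/

import Mathlib

open Matrix Polynomial

private lemma matC_mul {n : ℕ} (A B : Matrix (Fin n) (Fin n) ℝ) :
    (A * B).map (C : ℝ →+* ℝ[X]) = A.map C * B.map C := by
  simpa using map_mul ((C : ℝ →+* ℝ[X]).mapMatrix) A B

private lemma charmatrix_conj' {n : ℕ} (P M Q : Matrix (Fin n) (Fin n) ℝ)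
    (h1 : P * Q = 1) :
    charmatrix (P * M * Q) = P.map C * charmatrix M * Q.map C := by
  have hPQ : P.map (C : ℝ →+* ℝ[X]) * Q.map C = 1 := by
    rw [← matC_mul, h1]; simp
  unfold charmatrix
  rw [mul_sub, sub_mul]
  congr 1
  · have hc := (Matrix.scalar_commute (X : ℝ[X]) (fun r' => Commute.all _ _) (P.map C)).eq
    rw [← hc, mul_assoc, hPQ, mul_one]
  · simp only [RingHom.mapMatrix_apply, matC_mul]

private lemma charpoly_conj' {n : ℕ} (P M Q : Matrix (Fin n) (Fin n) ℝ)
    (h1 : P * Q = 1) : (P * M * Q).charpoly = M.charpoly := by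
  have hdet : (P.map (C : ℝ →+* ℝ[X])).det * (Q.map C).det = 1 := by
    rw [← det_mul, ← matC_mul, h1]; simp
  rw [Matrix.charpoly, charmatrix_conj' P M Q h1, det_mul, det_mul, Matrix.charpoly]
  calc (P.map (C : ℝ →+* ℝ[X])).det * (charmatrix M).det * (Q.map C).det
      = ((P.map (C : ℝ →+* ℝ[X])).det * (Q.map C).det) * (charmatrix M).det := by ring
    _ = (charmatrix M).det := by rw [hdet, one_mul]

private lemma charmatrix_diagonal' {n : ℕ} (d : Fin n → ℝ) :
    charmatrix (Matrix.diagonal d) = Matrix.diagonal (fun i => (X : ℝ[X]) - C (d i)) := by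
  ext i j
  by_cases h : i = j
  · subst h; simp
  · simp [h, Matrix.diagonal_apply_ne _ h]

/-- Simultaneous balancing of a pair of symmetric positive definite matrices: there is
an invertible `T` with `T X Tᵀ = T⁻ᵀ Y T⁻¹ = Σ = diag(σ₁ ≥ ... ≥ σₙ > 0)`, where the
`σ_i` are the square roots of the eigenvalues of `XY` (with multiplicity). -/
theorem simultaneous_balancing {n : ℕ}
    (X Y : Matrix (Fin n) (Fin n) ℝ)
    (hX : X.PosDef) (hXsym : Xᵀ = X)
    (hY : Y.PosDef) (hYsym : Yᵀ = Y) :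
    ∃ (T : Matrix (Fin n) (Fin n) ℝ) (σ : Fin n → ℝ),
      IsUnit T ∧ Antitone σ ∧ (∀ i, 0 < σ i) ∧
      T * X * Tᵀ = Matrix.diagonal σ ∧
      (T⁻¹)ᵀ * Y * T⁻¹ = Matrix.diagonal σ ∧
      (X * Y).charpoly = ∏ i, (Polynomial.X - Polynomial.C (σ i ^ 2)) := by
  classical
  -- square root of X
  open scoped MatrixOrder in
  set S : Matrix (Fin n) (Fin n) ℝ := CFC.sqrt X with hSdef
  open scoped MatrixOrder in
  have hSpsd : S.PosSemidef := (CFC.sqrt_nonneg X).posSemidef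
  open scoped MatrixOrder in
  have hSS : S * S = X := CFC.sqrt_mul_sqrt_self X hX.posSemidef.nonneg
  have hSsym : Sᵀ = S := by
    have := hSpsd.isHermitian
    simpa [Matrix.IsHermitian, Matrix.conjTranspose_eq_transpose_of_trivial] using this
  have hSdetU : IsUnit S.det := by
    have h2 : S.det * S.det = X.det := by rw [← det_mul, hSS]
    have hpos : (0:ℝ) < X.det := hX.det_pos
    rcases eq_or_ne S.det 0 with h | h
    · exfalso; rw [h, mul_zero] at h2; linarith
    · exact h.isUnit
  have hSinv : S⁻¹ * S = 1 := Matrix.nonsing_inv_mul _ hSdetU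
  have hSinv' : S * S⁻¹ = 1 := Matrix.mul_nonsing_inv _ hSdetU
  have hSinvsym : (S⁻¹)ᵀ = S⁻¹ := by rw [Matrix.transpose_nonsing_inv, hSsym]
  -- the positive definite matrix M = S Y S
  set M : Matrix (Fin n) (Fin n) ℝ := S * Y * S with hMdef
  have hM : M.PosDef := by
    refine Matrix.PosDef.of_dotProduct_mulVec_pos ?_ (fun x hx => ?_)
    · show Mᴴ = M
      rw [Matrix.conjTranspose_eq_transpose_of_trivial, hMdef, Matrix.transpose_mul,
        Matrix.transpose_mul, hSsym, hYsym, Matrix.mul_assoc]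
    · have hx' : S *ᵥ x ≠ 0 := by
        intro h
        apply hx
        have := congrArg (fun v => S⁻¹ *ᵥ v) h
        simpa [Matrix.mulVec_mulVec, hSinv] using this
      have hvm : x ᵥ* S = S *ᵥ x := by
        nth_rewrite 1 [← hSsym]
        exact Matrix.vecMul_transpose S x
      have hkey : x ⬝ᵥ (S * Y * S) *ᵥ x = (S *ᵥ x) ⬝ᵥ Y *ᵥ (S *ᵥ x) := by
        rw [← Matrix.mulVec_mulVec, ← Matrix.mulVec_mulVec,
          Matrix.dotProduct_mulVec x S, hvm]
      have hpos := hY.dotProduct_mulVec_pos hx'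
      rw [hMdef]
      simpa [hkey] using hpos
  have hMh : M.IsHermitian := hM.isHermitian
  set μ : Fin n → ℝ := hMh.eigenvalues with hμdef
  have hμpos : ∀ i, 0 < μ i := hM.eigenvalues_pos
  set U : Matrix (Fin n) (Fin n) ℝ := (hMh.eigenvectorUnitary : Matrix (Fin n) (Fin n) ℝ)
    with hUdef
  have hUmem : U ∈ Matrix.unitaryGroup (Fin n) ℝ := (hMh.eigenvectorUnitary).2
  have hU1 : U * Uᵀ = 1 := by
    have := (Matrix.mem_unitaryGroup_iff.mp hUmem)
    rwa [Matrix.star_eq_conjTranspose, Matrix.conjTranspose_eq_transpose_of_trivial] at this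
  have hU2 : Uᵀ * U = 1 := by
    have := (Matrix.mem_unitaryGroup_iff'.mp hUmem)
    rwa [Matrix.star_eq_conjTranspose, Matrix.conjTranspose_eq_transpose_of_trivial] at this
  have hspec : M = U * Matrix.diagonal μ * Uᵀ := by
    have h := hMh.spectral_theorem
    simp only [Unitary.conjStarAlgAut_apply] at h
    rw [Matrix.star_eq_conjTranspose, Matrix.conjTranspose_eq_transpose_of_trivial] at h
    simpa [RCLike.ofReal_real_eq_id] using h
  -- sort eigenvalues in decreasing order
  set e : Equiv.Perm (Fin n) := Tuple.sort (fun i => -μ i) with hedef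
  have hmono : Monotone ((fun i => -μ i) ∘ e) := Tuple.monotone_sort _
  have hantiμ : Antitone (fun i => μ (e i)) := by
    intro i j hij
    have := hmono hij
    simpa using this
  set σ : Fin n → ℝ := fun i => Real.sqrt (μ (e i)) with hσdef
  have hσpos : ∀ i, 0 < σ i := fun i => Real.sqrt_pos.mpr (hμpos _)
  have hσanti : Antitone σ := fun i j hij => Real.sqrt_le_sqrt (hantiμ hij)
  have hσsq : ∀ i, σ i ^ 2 = μ (e i) := fun i => Real.sq_sqrt (hμpos _).le
  set τ : Fin n → ℝ := fun i => Real.sqrt (σ i) with hτdef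
  have hτpos : ∀ i, 0 < τ i := fun i => Real.sqrt_pos.mpr (hσpos i)
  have hττ : ∀ i, τ i * τ i = σ i := fun i => Real.mul_self_sqrt (hσpos i).le
  -- permuted eigenvector matrix
  set V : Matrix (Fin n) (Fin n) ℝ := U.submatrix id (⇑e) with hVdef
  have hVt : Vᵀ = Uᵀ.submatrix (⇑e) id := by
    rw [hVdef, Matrix.transpose_submatrix]
  have hV1 : V * Vᵀ = 1 := by
    rw [hVdef, hVt, Matrix.submatrix_mul_equiv, hU1, Matrix.submatrix_id_id]
  have hV2 : Vᵀ * V = 1 := by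
    have h := Matrix.submatrix_mul_equiv Uᵀ U (⇑e) (Equiv.refl (Fin n)) (⇑e)
    simp only [Equiv.coe_refl] at h
    rw [hVdef, hVt, h, hU2, Matrix.submatrix_one_equiv]
  have hVDV : V * Matrix.diagonal (fun i => μ (e i)) * Vᵀ = M := by
    have hd : Matrix.diagonal (fun i => μ (e i)) = (Matrix.diagonal μ).submatrix (⇑e) (⇑e) := by
      rw [Matrix.submatrix_diagonal_equiv]; rfl
    rw [hd, hVdef, hVt, Matrix.submatrix_mul_equiv, Matrix.submatrix_mul_equiv,
      Matrix.submatrix_id_id, ← hspec]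
  have hVMV : Vᵀ * M * V = Matrix.diagonal (fun i => μ (e i)) := by
    rw [← hVDV]
    calc Vᵀ * (V * Matrix.diagonal (fun i => μ (e i)) * Vᵀ) * V
        = (Vᵀ * V) * Matrix.diagonal (fun i => μ (e i)) * (Vᵀ * V) := by
          simp only [Matrix.mul_assoc]
      _ = Matrix.diagonal (fun i => μ (e i)) := by rw [hV2, Matrix.one_mul, Matrix.mul_one]
  -- the balancing transformation
  set T : Matrix (Fin n) (Fin n) ℝ := Matrix.diagonal τ * Vᵀ * S⁻¹ with hTdef
  set Ti : Matrix (Fin n) (Fin n) ℝ := S * V * Matrix.diagonal (fun i => (τ i)⁻¹) with hTidef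
  have hdiagτ : Matrix.diagonal τ * Matrix.diagonal (fun i => (τ i)⁻¹) = 1 := by
    rw [Matrix.diagonal_mul_diagonal]
    convert Matrix.diagonal_one
    exact mul_inv_cancel₀ (hτpos _).ne'
  have hdiagτ' : Matrix.diagonal (fun i => (τ i)⁻¹) * Matrix.diagonal τ = 1 := by
    rw [Matrix.diagonal_mul_diagonal]
    convert Matrix.diagonal_one
    exact inv_mul_cancel₀ (hτpos _).ne'
  have hTTi : T * Ti = 1 := by
    rw [hTdef, hTidef]
    calc Matrix.diagonal τ * Vᵀ * S⁻¹ * (S * V * Matrix.diagonal fun i => (τ i)⁻¹)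
        = Matrix.diagonal τ * (Vᵀ * ((S⁻¹ * S) * V)) * Matrix.diagonal (fun i => (τ i)⁻¹) := by
          simp only [Matrix.mul_assoc]
      _ = Matrix.diagonal τ * Matrix.diagonal (fun i => (τ i)⁻¹) := by
          rw [hSinv, Matrix.one_mul, hV2, Matrix.mul_one]
      _ = 1 := hdiagτ
  have hTiT : Ti * T = 1 := by
    rw [hTidef, hTdef]
    calc S * V * Matrix.diagonal (fun i => (τ i)⁻¹) * (Matrix.diagonal τ * Vᵀ * S⁻¹)
        = S * (V * ((Matrix.diagonal (fun i => (τ i)⁻¹) * Matrix.diagonal τ) * Vᵀ)) * S⁻¹ := by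
          simp only [Matrix.mul_assoc]
      _ = S * S⁻¹ := by rw [hdiagτ', Matrix.one_mul, hV1, Matrix.mul_one]
      _ = 1 := hSinv'
  have hTunit : IsUnit T := ⟨⟨T, Ti, hTTi, hTiT⟩, rfl⟩
  have hTinv : T⁻¹ = Ti := Matrix.inv_eq_right_inv hTTi
  refine ⟨T, σ, hTunit, hσanti, hσpos, ?_, ?_, ?_⟩
  · -- T X Tᵀ = diag σ
    have hTt : Tᵀ = S⁻¹ * V * Matrix.diagonal τ := by
      rw [hTdef, Matrix.transpose_mul, Matrix.transpose_mul, hSinvsym,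
        Matrix.transpose_transpose, Matrix.diagonal_transpose, Matrix.mul_assoc]
    rw [hTt, hTdef, ← hSS]
    calc Matrix.diagonal τ * Vᵀ * S⁻¹ * (S * S) * (S⁻¹ * V * Matrix.diagonal τ)
        = Matrix.diagonal τ * (Vᵀ * ((S⁻¹ * S) * ((S * S⁻¹) * V))) * Matrix.diagonal τ := by
          simp only [Matrix.mul_assoc]
      _ = Matrix.diagonal τ * Matrix.diagonal τ := by
          rw [hSinv, hSinv', Matrix.one_mul, Matrix.one_mul, hV2, Matrix.mul_one]
      _ = Matrix.diagonal σ := by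
          rw [Matrix.diagonal_mul_diagonal]
          exact congrArg Matrix.diagonal (funext fun i => hττ i)
  · -- T⁻ᵀ Y T⁻¹ = diag σ
    have hTit : Tiᵀ = Matrix.diagonal (fun i => (τ i)⁻¹) * Vᵀ * S := by
      rw [hTidef, Matrix.transpose_mul, Matrix.transpose_mul, hSsym,
        Matrix.diagonal_transpose, Matrix.mul_assoc]
    rw [hTinv, hTit, hTidef]
    calc Matrix.diagonal (fun i => (τ i)⁻¹) * Vᵀ * S * Y *
          (S * V * Matrix.diagonal fun i => (τ i)⁻¹)
        = Matrix.diagonal (fun i => (τ i)⁻¹) * (Vᵀ * (S * Y * S) * V) *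
            Matrix.diagonal (fun i => (τ i)⁻¹) := by
          simp only [Matrix.mul_assoc]
      _ = Matrix.diagonal (fun i => (τ i)⁻¹) * Matrix.diagonal (fun i => μ (e i)) *
            Matrix.diagonal (fun i => (τ i)⁻¹) := by rw [← hMdef, hVMV]
      _ = Matrix.diagonal σ := by
          rw [Matrix.diagonal_mul_diagonal, Matrix.diagonal_mul_diagonal]
          refine congrArg Matrix.diagonal (funext fun i => ?_)
          have h1 : μ (e i) = τ i * τ i * σ i := by
            rw [hττ i, ← hσsq i]; ring
          rw [h1]
          have hne : τ i * τ i ≠ 0 := mul_ne_zero (hτpos i).ne' (hτpos i).ne'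
          field_simp
          exact mul_div_cancel_left₀ _ (hτpos i).ne'
  · -- charpoly
    have hXY : X * Y = S * M * S⁻¹ := by
      rw [hMdef, ← hSS]
      calc S * S * Y = S * (S * Y) * (S * S⁻¹) := by
            rw [hSinv', Matrix.mul_one, Matrix.mul_assoc]
        _ = S * (S * Y * S) * S⁻¹ := by simp only [Matrix.mul_assoc]
    have h1 : (X * Y).charpoly = M.charpoly := by
      rw [hXY]; exact charpoly_conj' S M S⁻¹ hSinv'
    have h2 : M.charpoly = (Matrix.diagonal (fun i => μ (e i))).charpoly := by
      rw [← hVDV]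
      exact charpoly_conj' V _ Vᵀ hV1
    rw [h1, h2, Matrix.charpoly, charmatrix_diagonal', Matrix.det_diagonal]
    exact Finset.prod_congr rfl fun i _ => by rw [hσsq i]
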